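/- The space of (1/2)-derivations of the Witt algebra W_1(1) over a field of characteristic p > 3 is a commutative associative algebra isomorphic to K[x]/(x^p); in particular, it contains nonzero nilpotent elements (divisors of zero). -/

import Mathlib

open Finsupp Polynomial

noncomputable def WittTau (K : Type*) [Semiring K] (p : ℕ) (c : ZMod p) :
    Module.End K (ZMod p →₀ K) :=
  Finsupp.lmapDomain K K (fun x => x - c)

theorem WittTau_single (K : Type*) [Semiring K] (p : ℕ) (c a : ZMod p) (x : K) :
    WittTau K p c (Finsupp.single a x) = Finsupp.single (a - c) x := by
  simp [WittTau, Finsupp.mapDomain_single]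

theorem WittTau_mul (K : Type*) [Semiring K] (p : ℕ) (a b : ZMod p) :
    WittTau K p a * WittTau K p b = WittTau K p (a + b) := by
  show (WittTau K p a).comp (WittTau K p b) = _
  rw [WittTau, WittTau, WittTau, ← Finsupp.lmapDomain_comp]
  congr 1
  funext x
  show x - b - a = x - (a + b)
  ring

theorem WittTau_zero (K : Type*) [Semiring K] (p : ℕ) :
    WittTau K p 0 = 1 := by
  have : (fun x : ZMod p => x - 0) = id := by funext x; simp
  rw [WittTau, this, Finsupp.lmapDomain_id]
  rfl

theorem WittTau_pow (K : Type*) [Semiring K] (p : ℕ) (n : ℕ) :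
    (WittTau K p 1) ^ n = WittTau K p (n : ZMod p) := by
  induction n with
  | zero => simpa using (WittTau_zero K p).symm
  | succ n ih =>
    rw [pow_succ, ih, WittTau_mul]
    push_cast
    ring_nf

section Aux
variable {K : Type*} [Field K] {p : ℕ} [Fact p.Prime] [CharP K p]
set_option linter.unusedSectionVars false
variable {e : ZMod p → (ZMod p →₀ K)} {br : (ZMod p →₀ K) → (ZMod p →₀ K) → (ZMod p →₀ K)}
variable (he : ∀ i, e i = Finsupp.single i 1)
variable (hbr : ∀ f g : ZMod p →₀ K, br f g =
      f.sum fun i x => g.sum fun j y =>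
        (x * y * (ZMod.castHom (dvd_refl p) K (j - i))) • e (i + j))

include he hbr

theorem br_singles (i j : ZMod p) :
    br (e i) (e j) = (ZMod.castHom (dvd_refl p) K (j - i)) • e (i + j) := by
  rw [hbr, he i, he j, Finsupp.sum_single_index (by simp [Finsupp.sum_single_index]),
    Finsupp.sum_single_index (by simp)]
  simp

theorem br_apply_right (f : ZMod p →₀ K) (j m : ZMod p) :
    (br f (e j)) m = f (m - j) * (ZMod.castHom (dvd_refl p) K (j - (m - j))) := by
  rw [hbr]
  have h1 : (f.sum fun i x => (e j).sum fun j' y =>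
      (x * y * (ZMod.castHom (dvd_refl p) K (j' - i))) • e (i + j')) =
      f.sum fun i x => Finsupp.single (i + j) (x * (ZMod.castHom (dvd_refl p) K (j - i))) := by
    apply Finsupp.sum_congr
    intro i _
    rw [he j, Finsupp.sum_single_index (by simp), he, Finsupp.smul_single, mul_one,
      smul_eq_mul, mul_one]
  rw [h1, Finsupp.sum_apply, Finsupp.sum]
  rw [Finset.sum_eq_single (m - j) (fun i _ hi => by
        rw [Finsupp.single_apply, if_neg (fun h => hi (by rw [← h]; ring))]
      ) (fun hb => by
        rw [Finsupp.notMem_support_iff.mp hb, Finsupp.single_apply, zero_mul]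
        simp)]
  rw [Finsupp.single_apply, if_pos (by ring)]

theorem br_apply_left (g : ZMod p →₀ K) (i m : ZMod p) :
    (br (e i) g) m = g (m - i) * (ZMod.castHom (dvd_refl p) K ((m - i) - i)) := by
  rw [hbr, he i, Finsupp.sum_single_index (by simp), Finsupp.sum_apply, Finsupp.sum]
  rw [Finset.sum_eq_single (m - i) (fun j _ hj => by
        rw [one_mul, Finsupp.smul_apply, he, Finsupp.single_apply,
          if_neg (fun h => hj (by rw [← h]; ring)), smul_zero]
      ) (fun hb => by
        rw [Finsupp.notMem_support_iff.mp hb, Finsupp.smul_apply]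
        simp)]
  rw [one_mul, Finsupp.smul_apply, he, Finsupp.single_apply, if_pos (by ring)]
  simp [mul_comm]

theorem br_add_left (f₁ f₂ g : ZMod p →₀ K) :
    br (f₁ + f₂) g = br f₁ g + br f₂ g := by
  rw [hbr, hbr, hbr]
  apply Finsupp.sum_add_index
  · intro i _; simp
  · intro i _ x₁ x₂
    rw [← Finsupp.sum_add]
    apply Finsupp.sum_congr
    intro j _
    rw [← add_smul]; congr 1; ring

theorem br_add_right (f g₁ g₂ : ZMod p →₀ K) :
    br f (g₁ + g₂) = br f g₁ + br f g₂ := by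
  rw [hbr, hbr, hbr, ← Finsupp.sum_add]
  apply Finsupp.sum_congr
  intro i _
  apply Finsupp.sum_add_index
  · intro j _; simp
  · intro j _ y₁ y₂
    rw [← add_smul]; congr 1; ring

theorem br_smul_left (a : K) (f g : ZMod p →₀ K) :
    br (a • f) g = a • br f g := by
  rw [hbr, hbr, Finsupp.sum_smul_index (by intro i; simp), Finsupp.smul_sum]
  apply Finsupp.sum_congr
  intro i _
  rw [Finsupp.smul_sum]
  apply Finsupp.sum_congr
  intro j _
  simp only [smul_smul]; congr 1; ring

theorem br_smul_right (a : K) (f g : ZMod p →₀ K) :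
    br f (a • g) = a • br f g := by
  rw [hbr, hbr, Finsupp.smul_sum]
  apply Finsupp.sum_congr
  intro i _
  rw [Finsupp.sum_smul_index (by intro j; simp), Finsupp.smul_sum]
  apply Finsupp.sum_congr
  intro j _
  simp only [smul_smul]; congr 1; ring


theorem tau_hd (hp : 3 < p) (c : ZMod p) (f g : ZMod p →₀ K) :
    (WittTau K p c) (br f g) =
      (2:K)⁻¹ • (br ((WittTau K p c) f) g + br f ((WittTau K p c) g)) := by
  classical
  have h2K : (2:K) ≠ 0 := by
    intro h
    have h2 : ((2:ℕ):K) = 0 := by exact_mod_cast h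
    have := (CharP.cast_eq_zero_iff K p 2).mp h2
    have := Nat.le_of_dvd (by norm_num) this
    omega
  set cst := (ZMod.castHom (dvd_refl p) K) with hcst
  have hLHS : (WittTau K p c) (br f g) =
      f.sum fun i x => g.sum fun j y =>
        (x * y * cst (j - i)) • Finsupp.single (i + j - c) 1 := by
    rw [hbr, map_finsuppSum]
    apply Finsupp.sum_congr; intro i _
    rw [map_finsuppSum]
    apply Finsupp.sum_congr; intro j _
    rw [map_smul, he, WittTau_single]
  have hmap : ∀ h : ZMod p →₀ K, (WittTau K p c) h = Finsupp.mapDomain (fun x => x - c) h :=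
    fun h => rfl
  have hL : br ((WittTau K p c) f) g =
      f.sum fun i x => g.sum fun j y => (x * y * cst (j - (i - c))) • e (i - c + j) := by
    rw [hbr, hmap]
    apply Finsupp.sum_mapDomain_index
    · intro i; simp
    · intro i x₁ x₂
      rw [← Finsupp.sum_add]
      apply Finsupp.sum_congr; intro j _
      rw [← add_smul]; congr 1; ring
  have hR : br f ((WittTau K p c) g) =
      f.sum fun i x => g.sum fun j y => (x * y * cst (j - c - i)) • e (i + (j - c)) := by
    rw [hbr]
    apply Finsupp.sum_congr; intro i _
    rw [hmap]
    apply Finsupp.sum_mapDomain_index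
    · intro j; simp
    · intro j y₁ y₂
      rw [← add_smul]; congr 1; ring
  rw [hLHS, hL, hR, ← Finsupp.sum_add, Finsupp.smul_sum]
  apply Finsupp.sum_congr; intro i _
  rw [← Finsupp.sum_add, Finsupp.smul_sum]
  apply Finsupp.sum_congr; intro j _
  rw [he, he]
  have h1 : i - c + j = i + j - c := by ring
  have h2 : i + (j - c) = i + j - c := by ring
  rw [h1, h2, ← add_smul, smul_smul]
  congr 1
  have e1 : j - (i - c) = (j - i) + c := by ring
  have e2 : j - c - i = (j - i) - c := by ring
  rw [e1, e2, map_add, map_sub]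
  simp only [map_sub]
  field_simp
  ring

theorem keyR (T : Module.End K (ZMod p →₀ K))
    (hT : ∀ f g, T (br f g) = (2:K)⁻¹ • (br (T f) g + br f (T g))) (i j k : ZMod p) :
    (ZMod.castHom (dvd_refl p) K (j - i)) * (T (e (i + j))) (i + j - k) =
      (2:K)⁻¹ * ((T (e i)) (i - k) * (ZMod.castHom (dvd_refl p) K (j - i + k)) +
        (T (e j)) (j - k) * (ZMod.castHom (dvd_refl p) K (j - i - k))) := by
  have h := hT (e i) (e j)
  rw [br_singles he hbr, map_smul] at h
  have h2 := congrArg (fun v : ZMod p →₀ K => v (i + j - k)) h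
  simp only [Finsupp.smul_apply, Finsupp.add_apply] at h2
  rw [br_apply_right he hbr, br_apply_left he hbr] at h2
  have e1 : i + j - k - j = i - k := by ring
  have e2 : i + j - k - i = j - k := by ring
  rw [e1, e2] at h2
  have e3 : j - (i - k) = j - i + k := by ring
  have e4 : (j - k) - i = j - i - k := by ring
  rw [e3, e4] at h2
  simpa only [smul_eq_mul] using h2

theorem key_const (hp : 3 < p) (T : Module.End K (ZMod p →₀ K))
    (hT : ∀ f g, T (br f g) = (2:K)⁻¹ • (br (T f) g + br f (T g))) (k j : ZMod p) :
    (T (e j)) (j - k) = (T (e 0)) (0 - k) := by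
  have hPrime : p.Prime := Fact.out
  have hinj : Function.Injective (ZMod.castHom (dvd_refl p) K) :=
    (ZMod.castHom (dvd_refl p) K).injective
  have hcst : ∀ z : ZMod p, z ≠ 0 → (ZMod.castHom (dvd_refl p) K) z ≠ 0 := by
    intro z hz h0
    exact hz (hinj (by simpa using h0))
  have h2K : (2:K) ≠ 0 := by
    intro h
    have h2 : ((2:ℕ):K) = 0 := by exact_mod_cast h
    have := Nat.le_of_dvd (by norm_num) ((CharP.cast_eq_zero_iff K p 2).mp h2)
    omega
  have hz : ∀ n : ℕ, 0 < n → n < p → ((n : ZMod p) ≠ 0) := by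
    intro n h1 h2 h0
    rw [ZMod.natCast_eq_zero_iff] at h0
    have := Nat.le_of_dvd h1 h0
    omega
  have A : ∀ j : ZMod p, j ≠ 0 → j + k ≠ 0 → (T (e j)) (j - k) = (T (e 0)) (0 - k) := by
    intro j hj hjk
    have h := keyR he hbr T hT 0 j k
    simp only [zero_add, sub_zero] at h
    set u := (T (e j)) (j - k) with hu
    set v := (T (e 0)) (0 - k) with hv
    have hadd : (ZMod.castHom (dvd_refl p) K) (j + k)
        = (ZMod.castHom (dvd_refl p) K) j + (ZMod.castHom (dvd_refl p) K) k := map_add _ _ _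
    have hsub : (ZMod.castHom (dvd_refl p) K) (j - k)
        = (ZMod.castHom (dvd_refl p) K) j - (ZMod.castHom (dvd_refl p) K) k := map_sub _ _ _
    apply mul_left_cancel₀ (hcst _ hjk)
    rw [hadd, hsub] at h
    rw [hadd]
    have h2 : ((ZMod.castHom (dvd_refl p) K) j + (ZMod.castHom (dvd_refl p) K) k) * u
        = 2 * ((ZMod.castHom (dvd_refl p) K) j * u)
          - ((ZMod.castHom (dvd_refl p) K) j - (ZMod.castHom (dvd_refl p) K) k) * u := by ring
    rw [h2, h]
    field_simp
    ring
  by_cases hj : j = 0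
  · rw [hj]
  by_cases hjk : j + k ≠ 0
  · exact A j hj hjk
  push_neg at hjk
  have hk : k ≠ 0 := by
    intro h; rw [h, add_zero] at hjk; exact hj hjk
  have hj' : j = -k := eq_neg_of_add_eq_zero_left hjk
  have h2z : (2 : ZMod p) ≠ 0 := by
    have := hz 2 (by norm_num) (by omega); exact_mod_cast this
  have h3z : (3 : ZMod p) ≠ 0 := by
    have := hz 3 (by norm_num) (by omega); exact_mod_cast this
  have h2k : 2 * k ≠ 0 := mul_ne_zero h2z hk
  have h3k : 3 * k ≠ 0 := mul_ne_zero h3z hk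
  have h := keyR he hbr T hT (-(2*k)) k k
  have r1 : -(2*k) + k = -k := by ring
  have r2 : -k - k = -(2*k) := by ring
  have r3 : k - -(2*k) = 3*k := by ring
  rw [r1, r2, r3] at h
  have hA1 : (T (e (-(2*k)))) (-(2*k) - k) = (T (e 0)) (0 - k) := by
    apply A
    · simpa using h2k
    · intro h0
      exact hk (by linear_combination -1 * h0)
  have hA2 : (T (e k)) (k - k) = (T (e 0)) (0 - k) := by
    apply A k hk
    intro h0
    exact h2k (by linear_combination h0)
  rw [hA1, hA2] at h
  rw [hj', r2]
  set X := (T (e (-k))) (-(2*k)) with hX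
  set v := (T (e 0)) (0 - k) with hv
  have hadd : (ZMod.castHom (dvd_refl p) K) (3*k + k)
      = (ZMod.castHom (dvd_refl p) K) (3*k) + (ZMod.castHom (dvd_refl p) K) k := map_add _ _ _
  have hsub : (ZMod.castHom (dvd_refl p) K) (3*k - k)
      = (ZMod.castHom (dvd_refl p) K) (3*k) - (ZMod.castHom (dvd_refl p) K) k := map_sub _ _ _
  rw [hadd, hsub] at h
  apply mul_left_cancel₀ (hcst _ h3k)
  rw [h]
  field_simp
  ring

theorem key_repr (hp : 3 < p) (T : Module.End K (ZMod p →₀ K))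
    (hT : ∀ f g, T (br f g) = (2:K)⁻¹ • (br (T f) g + br f (T g))) :
    T = ∑ k : ZMod p, ((T (e 0)) (0 - k)) • WittTau K p k := by
  apply Finsupp.lhom_ext
  intro b y
  have hby : Finsupp.single b y = y • e b := by
    rw [he, Finsupp.smul_single, smul_eq_mul, mul_one]
  rw [hby, map_smul, LinearMap.sum_apply]
  ext a
  rw [Finsupp.smul_apply, Finsupp.finset_sum_apply]
  have hterm : ∀ k : ZMod p,
      ((((T (e 0)) (0 - k)) • WittTau K p k) (y • e b)) a
        = (if k = b - a then ((T (e 0)) (0 - k)) * y else 0) := by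
    intro k
    rw [LinearMap.smul_apply, map_smul, he b, WittTau_single, Finsupp.smul_apply,
      Finsupp.smul_apply, Finsupp.single_apply]
    by_cases hk : k = b - a
    · rw [if_pos hk, if_pos (by rw [hk]; ring), smul_eq_mul, smul_eq_mul, mul_one, mul_comm]
    · rw [if_neg hk, if_neg (fun h => hk (by rw [← h]; ring)), smul_zero, smul_zero]
  rw [Finset.sum_congr rfl (fun k _ => hterm k), Finset.sum_ite_eq' Finset.univ (b - a)
    (fun k => ((T (e 0)) (0 - k)) * y), if_pos (Finset.mem_univ _)]
  have h1 : a = b - (b - a) := by ring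
  rw [smul_eq_mul, h1, key_const he hbr hp T hT (b - a) b]
  ring

theorem hd_smul (a : K) (T : Module.End K (ZMod p →₀ K))
    (hT : ∀ f g, T (br f g) = (2:K)⁻¹ • (br (T f) g + br f (T g))) :
    ∀ f g, (a • T) (br f g) = (2:K)⁻¹ • (br ((a • T) f) g + br f ((a • T) g)) := by
  intro f g
  rw [LinearMap.smul_apply, hT f g, LinearMap.smul_apply, LinearMap.smul_apply,
    br_smul_left he hbr, br_smul_right he hbr, ← smul_add, smul_comm]

theorem hd_add (T₁ T₂ : Module.End K (ZMod p →₀ K))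
    (h₁ : ∀ f g, T₁ (br f g) = (2:K)⁻¹ • (br (T₁ f) g + br f (T₁ g)))
    (h₂ : ∀ f g, T₂ (br f g) = (2:K)⁻¹ • (br (T₂ f) g + br f (T₂ g))) :
    ∀ f g, (T₁ + T₂) (br f g) = (2:K)⁻¹ • (br ((T₁ + T₂) f) g + br f ((T₁ + T₂) g)) := by
  intro f g
  rw [LinearMap.add_apply, h₁ f g, h₂ f g, LinearMap.add_apply, LinearMap.add_apply,
    br_add_left he hbr, br_add_right he hbr, ← smul_add]
  congr 1
  abel

theorem hd_aeval (hp : 3 < p) (P : Polynomial K) :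
    ∀ f g, (Polynomial.aeval (WittTau K p 1) P) (br f g) =
      (2:K)⁻¹ • (br ((Polynomial.aeval (WittTau K p 1) P) f) g +
        br f ((Polynomial.aeval (WittTau K p 1) P) g)) := by
  induction P using Polynomial.induction_on' with
  | add P Q hP hQ =>
    rw [map_add]
    exact hd_add he hbr _ _ hP hQ
  | monomial n a =>
    rw [Polynomial.aeval_monomial, ← Algebra.smul_def, WittTau_pow]
    exact hd_smul he hbr a _ (fun f g => tau_hd he hbr hp _ f g)

end Aux

theorem half_derivations_of_Witt_algebra (K : Type*) [Field K] (p : ℕ)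
    [Fact p.Prime] [CharP K p] (hp : 3 < p)
    (e : ZMod p → (ZMod p →₀ K)) (he : ∀ i, e i = Finsupp.single i 1)
    (br : (ZMod p →₀ K) → (ZMod p →₀ K) → (ZMod p →₀ K))
    (hbr : ∀ f g : ZMod p →₀ K, br f g =
      f.sum fun i x => g.sum fun j y =>
        (x * y * (ZMod.castHom (dvd_refl p) K (j - i))) • e (i + j)) :
    ∃ S : Subalgebra K (Module.End K (ZMod p →₀ K)),
      (∀ D : Module.End K (ZMod p →₀ K),
        D ∈ S ↔ ∀ f g, D (br f g) = (2 : K)⁻¹ • (br (D f) g + br f (D g))) ∧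
      Nonempty (S ≃ₐ[K] (Polynomial K ⧸ (Ideal.span {Polynomial.X ^ p} : Ideal (Polynomial K)))) ∧
      ∃ D : Module.End K (ZMod p →₀ K),
        (∀ f g, D (br f g) = (2 : K)⁻¹ • (br (D f) g + br f (D g))) ∧
        D ≠ 0 ∧ IsNilpotent D := by
  classical
  have hPrime : p.Prime := Fact.out
  set τ1 : Module.End K (ZMod p →₀ K) := WittTau K p 1 with hτ1
  set D0 : Module.End K (ZMod p →₀ K) := WittTau K p 1 - 1 with hD0def
  set φ : Polynomial K →ₐ[K] Module.End K (ZMod p →₀ K) := Polynomial.aeval D0 with hφ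
  have haevalD0 : ∀ Q : Polynomial K,
      Polynomial.aeval D0 Q = Polynomial.aeval τ1 (Q.comp (Polynomial.X - Polynomial.C 1)) := by
    intro Q
    rw [Polynomial.aeval_comp]
    congr 1
    rw [map_sub, Polynomial.aeval_X, Polynomial.aeval_C, map_one, hD0def]
  have hDhd : ∀ T ∈ φ.range, ∀ f g,
      T (br f g) = (2 : K)⁻¹ • (br (T f) g + br f (T g)) := by
    rintro T ⟨P, rfl⟩
    show ∀ f g, (Polynomial.aeval D0 P) (br f g) =
      (2 : K)⁻¹ • (br ((Polynomial.aeval D0 P) f) g + br f ((Polynomial.aeval D0 P) g))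
    rw [haevalD0]
    exact hd_aeval he hbr hp _
  have hrev : ∀ T : Module.End K (ZMod p →₀ K),
      (∀ f g, T (br f g) = (2 : K)⁻¹ • (br (T f) g + br f (T g))) → T ∈ φ.range := by
    intro T hT
    refine ⟨∑ k : ZMod p, Polynomial.C ((T (e 0)) (0 - k)) *
      (Polynomial.X + Polynomial.C 1) ^ (k.val), ?_⟩
    have hXC : Polynomial.aeval D0 (Polynomial.X + Polynomial.C 1) = τ1 := by
      rw [map_add, Polynomial.aeval_X, Polynomial.aeval_C, map_one, hD0def]
      abel
    show Polynomial.aeval D0 _ = T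
    have hsum : Polynomial.aeval D0 (∑ k : ZMod p, Polynomial.C ((T (e 0)) (0 - k)) *
        (Polynomial.X + Polynomial.C 1) ^ (k.val)) =
        ∑ k : ZMod p, ((T (e 0)) (0 - k)) • WittTau K p k := by
      rw [map_sum]
      apply Finset.sum_congr rfl
      intro k _
      rw [map_mul, Polynomial.aeval_C, map_pow, map_add, Polynomial.aeval_X,
        Polynomial.aeval_C, map_one]
      have hD1 : D0 + 1 = WittTau K p 1 := by rw [hD0def]; abel
      rw [hD1, WittTau_pow, ZMod.natCast_zmod_val, ← Algebra.smul_def]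
    rw [hsum]
    exact (key_repr he hbr hp T hT).symm
  haveI hnt : Nontrivial (Module.End K (ZMod p →₀ K)) := by
    refine ⟨1, 0, fun h => ?_⟩
    have h1 : (1 : Module.End K (ZMod p →₀ K)) (Finsupp.single 0 1)
        = (0 : Module.End K (ZMod p →₀ K)) (Finsupp.single 0 1) := by rw [h]
    simp only [Module.End.one_apply, LinearMap.zero_apply] at h1
    exact (one_ne_zero : (1:K) ≠ 0) (by
      have := congrFun (congrArg (fun v : ZMod p →₀ K => (v : ZMod p → K)) h1) 0
      simpa using this)
  haveI hCharEnd : CharP (Module.End K (ZMod p →₀ K)) p :=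
    charP_of_injective_ringHom (algebraMap K _).injective p
  have hτp : τ1 ^ p = 1 := by
    rw [hτ1, WittTau_pow, ZMod.natCast_self, WittTau_zero]
  have hD0p : D0 ^ p = 0 := by
    have hcomm : Commute (WittTau K p 1) (1 : Module.End K (ZMod p →₀ K)) :=
      Commute.one_right _
    have hsub := sub_pow_char_of_commute (R := Module.End K (ZMod p →₀ K)) (p := p) hcomm
    rw [hD0def, hsub, one_pow, ← hτ1, hτp, sub_self]
  have hker : RingHom.ker φ = Ideal.span {(Polynomial.X : Polynomial K) ^ p} := by
    have hmonic : ((Polynomial.X : Polynomial K) ^ p).Monic := Polynomial.monic_X_pow p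
    ext P
    constructor
    · intro hP
      rw [RingHom.mem_ker] at hP
      rw [Ideal.mem_span_singleton, ← Polynomial.modByMonic_eq_zero_iff_dvd hmonic]
      by_contra hR
      set R := P %ₘ (Polynomial.X ^ p) with hRdef
      have haR : Polynomial.aeval D0 R = 0 := by
        have hsplit := Polynomial.modByMonic_add_div P (Polynomial.X ^ p)
        have h2 := congrArg (Polynomial.aeval D0) hsplit
        rw [map_add, map_mul, map_pow, Polynomial.aeval_X, hD0p, zero_mul, add_zero] at h2
        rw [← hRdef] at h2
        rw [h2]
        exact hP
      set R' := R.comp (Polynomial.X - Polynomial.C 1) with hR'def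
      have hR'0 : R' ≠ 0 := by
        intro h0
        apply hR
        have hcomp : R = R'.comp (Polynomial.X + Polynomial.C 1) := by
          rw [hR'def, Polynomial.comp_assoc]
          have : ((Polynomial.X : Polynomial K) - Polynomial.C 1).comp
              (Polynomial.X + Polynomial.C (1:K)) = Polynomial.X := by
            rw [Polynomial.sub_comp, Polynomial.X_comp, Polynomial.C_comp]
            ring
          rw [this, Polynomial.comp_X]
        rw [hcomp, h0, Polynomial.zero_comp]
      have haR' : Polynomial.aeval τ1 R' = 0 := by
        rw [hR'def, ← haevalD0, haR]
      have hdeg : R.natDegree < p := by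
        have h1 := Polynomial.degree_modByMonic_lt P hmonic
        rw [Polynomial.degree_X_pow] at h1
        rw [← hRdef] at h1
        exact (Polynomial.natDegree_lt_iff_degree_lt hR).mpr h1
      have hdeg' : R'.natDegree < p := by
        rw [hR'def, Polynomial.natDegree_comp]
        have : (Polynomial.X - Polynomial.C (1:K)).natDegree = 1 :=
          Polynomial.natDegree_X_sub_C 1
        rw [this, mul_one]
        exact hdeg
      set d := R'.natDegree with hd
      have heval := congrArg
        (fun M : Module.End K (ZMod p →₀ K) => (M (Finsupp.single 0 1)) (0 - (d : ZMod p))) haR'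
      simp only [LinearMap.zero_apply, Finsupp.coe_zero, Pi.zero_apply] at heval
      rw [Polynomial.aeval_eq_sum_range, LinearMap.sum_apply, Finsupp.finset_sum_apply] at heval
      have hterm : ∀ i ∈ Finset.range (d + 1),
          ((R'.coeff i • τ1 ^ i) (Finsupp.single 0 1)) (0 - (d : ZMod p))
            = if i = d then R'.coeff d else 0 := by
        intro i hi
        rw [Finset.mem_range] at hi
        rw [LinearMap.smul_apply, hτ1, WittTau_pow, WittTau_single, Finsupp.smul_apply,
          Finsupp.single_apply]
        by_cases hid : i = d
        · rw [if_pos hid, if_pos (by rw [hid]), hid, smul_eq_mul, mul_one]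
        · rw [if_neg hid, if_neg (fun hcast => ?_), smul_zero]
          apply hid
          have h1 : ((i : ZMod p)) = ((d : ZMod p)) := by
            have := hcast
            linear_combination -this
          have h2 := congrArg ZMod.val h1
          rwa [ZMod.val_cast_of_lt (by omega), ZMod.val_cast_of_lt (by omega)] at h2
      rw [Finset.sum_congr rfl hterm, Finset.sum_ite_eq' (Finset.range (d+1)) d
        (fun _ => R'.coeff d), if_pos (Finset.self_mem_range_succ d)] at heval
      exact (Polynomial.leadingCoeff_ne_zero.mpr hR'0) heval
    · intro hP
      rw [Ideal.mem_span_singleton] at hP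
      obtain ⟨Q, rfl⟩ := hP
      rw [RingHom.mem_ker, map_mul, map_pow]
      show (Polynomial.aeval D0 Polynomial.X) ^ p * _ = 0
      rw [Polynomial.aeval_X, hD0p, zero_mul]
  refine ⟨φ.range, fun D => ⟨fun hD => hDhd D hD, fun h => hrev D h⟩, ?_, ?_⟩
  · exact ⟨(Ideal.quotientKerEquivRange φ).symm.trans (Ideal.quotientEquivAlgOfEq K hker)⟩
  · refine ⟨D0, hDhd D0 ⟨Polynomial.X, by exact Polynomial.aeval_X D0⟩, ?_, ⟨p, hD0p⟩⟩
    intro h0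
    have h1 : D0 (Finsupp.single 0 1) = 0 := by rw [h0]; rfl
    rw [hD0def, LinearMap.sub_apply, WittTau_single, Module.End.one_apply] at h1
    have hne : (0 : ZMod p) - 1 ≠ 0 := by
      rw [zero_sub, neg_ne_zero]
      exact one_ne_zero
    have h2 := DFunLike.congr_fun h1 (0 : ZMod p)
    simp [Finsupp.sub_apply, Finsupp.single_apply, hne] at h2
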